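/- For any matrix $H \in \mathbb{R}^{d\times 2}$ (i.e., with two columns), $\|\sigma(H)\|_* \le \|H\|_*$, where $\sigma$ is the entrywise ReLU and $\|\cdot\|_*$ is the nuclear norm. -/

import Mathlib

open Matrix BigOperators

noncomputable def frobSq {m n : ℕ} (A : Matrix (Fin m) (Fin n) ℝ) : ℝ :=
  ∑ i, ∑ j, (A i j)^2

noncomputable def singVals {m n : ℕ} (A : Matrix (Fin m) (Fin n) ℝ) : Fin n → ℝ :=
  fun i => Real.sqrt ((Matrix.posSemidef_conjTranspose_mul_self A).isHermitian.eigenvalues i)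

noncomputable def nuclearNorm {m n : ℕ} (A : Matrix (Fin m) (Fin n) ℝ) : ℝ :=
  ∑ i, singVals A i

noncomputable def relu : ℝ → ℝ := fun t => max t 0

section auxiliary

set_option maxHeartbeats 1000000

private lemma sqrt_sq_le' {c d : ℝ} (hc : 0 ≤ c) (h : d^2 ≤ c^2) : d ≤ c := by
  nlinarith [sq_nonneg (c - d), sq_nonneg (c + d)]

private lemma pt1 (A B : ℝ) : (if A < 0 ∧ B < 0 then (0:ℝ) else A)^2
    = (max A 0)^2 + (if 0 ≤ B then (max (-A) 0)^2 else 0) := by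
  rcases le_or_gt 0 A with hA|hA <;> rcases le_or_gt 0 B with hB|hB
  · rw [if_neg (by simp [not_lt.mpr hA]), max_eq_left hA, max_eq_right (neg_nonpos.mpr hA),
      if_pos hB]; ring
  · rw [if_neg (by simp [not_lt.mpr hA]), max_eq_left hA, max_eq_right (neg_nonpos.mpr hA),
      if_neg (not_le.mpr hB)]; ring
  · rw [if_neg (by simp [not_lt.mpr hB]), max_eq_right hA.le, max_eq_left (by linarith),
      if_pos hB]; ring
  · rw [if_pos ⟨hA, hB⟩, max_eq_right hA.le, if_neg (not_le.mpr hB)]; ring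

private lemma pt2 (A B : ℝ) :
    (if A < 0 ∧ B < 0 then (0:ℝ) else A) * (if A < 0 ∧ B < 0 then (0:ℝ) else B)
    = max A 0 * max B 0 - max (-A) 0 * max B 0 - max A 0 * max (-B) 0 := by
  rcases le_or_gt 0 A with hA|hA <;> rcases le_or_gt 0 B with hB|hB
  · have h : ¬(A < 0 ∧ B < 0) := by simp [not_lt.mpr hA]
    rw [if_neg h, if_neg h, max_eq_left hA, max_eq_left hB,
      max_eq_right (neg_nonpos.mpr hA), max_eq_right (neg_nonpos.mpr hB)]; ring
  · have h : ¬(A < 0 ∧ B < 0) := by simp [not_lt.mpr hA]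
    rw [if_neg h, if_neg h, max_eq_left hA, max_eq_right hB.le,
      max_eq_right (neg_nonpos.mpr hA), max_eq_left (by linarith)]; ring
  · have h : ¬(A < 0 ∧ B < 0) := by simp [not_lt.mpr hB]
    rw [if_neg h, if_neg h, max_eq_right hA.le, max_eq_left hB,
      max_eq_left (by linarith), max_eq_right (neg_nonpos.mpr hB)]; ring
  · rw [if_pos ⟨hA, hB⟩, if_pos ⟨hA, hB⟩, max_eq_right hA.le, max_eq_right hB.le]; ring

private lemma pt3 (A B : ℝ) : A^2 = (if A < 0 ∧ B < 0 then (0:ℝ) else A)^2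
    + (if A < 0 ∧ B < 0 then A^2 else 0) := by
  by_cases h : A < 0 ∧ B < 0 <;> simp [h]

private lemma pt4 (A B : ℝ) :
    A*B = (if A < 0 ∧ B < 0 then (0:ℝ) else A)*(if A < 0 ∧ B < 0 then (0:ℝ) else B)
    + (if A < 0 ∧ B < 0 then A*B else 0) := by
  by_cases h : A < 0 ∧ B < 0 <;> simp [h]

private lemma pt5 (A B : ℝ) :
    max (-A) 0 * max B 0 = (if 0 ≤ B then max (-A) 0 else 0) * max B 0 := by
  rcases le_or_gt 0 B with hB|hB
  · rw [if_pos hB]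
  · rw [if_neg (not_le.mpr hB), max_eq_right hB.le]; ring

private lemma pt6 (c : Prop) [Decidable c] (A : ℝ) :
    (if c then A else 0)^2 = (if c then A^2 else 0) := by
  by_cases h : c <;> simp [h]

private lemma pt7 (c : Prop) [Decidable c] (A B : ℝ) :
    (if c then A else 0)*(if c then B else 0) = (if c then A*B else 0) := by
  by_cases h : c <;> simp [h]

private lemma astep_lemma (p' q' p3 q3 m' m3 : ℝ)
    (hp'0 : 0 ≤ p') (hq'0 : 0 ≤ q') (hp30 : 0 ≤ p3) (hq30 : 0 ≤ q3)
    (hm'cs : m'^2 ≤ p'*q') (hm3cs : m3^2 ≤ p3*q3) :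
    p'*q' - m'^2 ≤ (p'+p3)*(q'+q3) - (m'+m3)^2 := by
  set s1 := Real.sqrt p' with hs1def
  set s2 := Real.sqrt q' with hs2def
  set s3 := Real.sqrt p3 with hs3def
  set s4 := Real.sqrt q3 with hs4def
  have hs1 : s1^2 = p' := Real.sq_sqrt hp'0
  have hs2 : s2^2 = q' := Real.sq_sqrt hq'0
  have hs3 : s3^2 = p3 := Real.sq_sqrt hp30
  have hs4 : s4^2 = q3 := Real.sq_sqrt hq30
  have hs10 : 0 ≤ s1 := Real.sqrt_nonneg _
  have hs20 : 0 ≤ s2 := Real.sqrt_nonneg _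
  have hs30 : 0 ≤ s3 := Real.sqrt_nonneg _
  have hs40 : 0 ≤ s4 := Real.sqrt_nonneg _
  have habs1 : |m'| ≤ s1*s2 := by
    apply sqrt_sq_le' (mul_nonneg hs10 hs20)
    rw [sq_abs]
    calc m'^2 ≤ p'*q' := hm'cs
      _ = (s1*s2)^2 := by rw [mul_pow, hs1, hs2]
  have habs3 : |m3| ≤ s3*s4 := by
    apply sqrt_sq_le' (mul_nonneg hs30 hs40)
    rw [sq_abs]
    calc m3^2 ≤ p3*q3 := hm3cs
      _ = (s3*s4)^2 := by rw [mul_pow, hs3, hs4]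
  have h5 : m'*m3 ≤ (s1*s2)*(s3*s4) := by
    calc m'*m3 ≤ |m' * m3| := le_abs_self _
      _ = |m'| * |m3| := abs_mul _ _
      _ ≤ (s1*s2)*(s3*s4) :=
        mul_le_mul habs1 habs3 (abs_nonneg _) (mul_nonneg hs10 hs20)
  have hcross : 2*((s1*s2)*(s3*s4)) ≤ p'*q3 + p3*q' := by
    have h := sq_nonneg (s1*s4 - s2*s3)
    have e1 : (s1*s4)^2 = p'*q3 := by rw [mul_pow, hs1, hs4]
    have e2 : (s2*s3)^2 = q'*p3 := by rw [mul_pow, hs2, hs3]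
    nlinarith [h, e1, e2]
  nlinarith [h5, hm3cs, hcross]

private lemma key_ineq (P Q m1 x y u v B : ℝ) (hP : 0 ≤ P) (hQ : 0 ≤ Q) (hm1 : 0 ≤ m1)
    (hx : 0 ≤ x) (hy : 0 ≤ y) (hu : 0 ≤ u) (hv : 0 ≤ v)
    (hm : m1^2 ≤ P*Q) (huc : u^2 ≤ x*Q) (hvc : v^2 ≤ y*P)
    (hB : B = (P+x)*(Q+y) - (m1-u-v)^2) (hB0 : 0 ≤ B) :
    2*Real.sqrt (P*Q - m1^2) ≤ x + y + 2*Real.sqrt B := by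
  have hA0 : (0:ℝ) ≤ P*Q - m1^2 := by linarith
  set rA := Real.sqrt (P*Q - m1^2) with hrAdef
  have hrA : rA^2 = P*Q - m1^2 := Real.sq_sqrt hA0
  have hrA0 : 0 ≤ rA := Real.sqrt_nonneg _
  rcases le_or_gt (2*rA) (x+y) with hcase | hcase
  · have := Real.sqrt_nonneg B
    linarith
  · have key2 : (rA - (x+y)/2)^2 ≤ B := by
      have expand : B - (rA - (x+y)/2)^2
          = P*y + x*Q + x*y + (2*m1*(u+v) - (u+v)^2) + (x+y)*rA - ((x+y)/2)^2 := by
        rw [hB]; linear_combination (-1 : ℝ) * hrA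
      rcases le_or_gt (u+v) (2*m1) with hw2 | hw2
      · have h1 : 0 ≤ (u+v)*(2*m1-(u+v)) :=
          mul_nonneg (by linarith) (by linarith)
        have h1' : 0 ≤ 2*m1*(u+v) - (u+v)^2 := by linarith [h1, sq_nonneg (u+v)]
        have h3 : (x+y)*(x+y) ≤ (x+y)*(2*rA) :=
          mul_le_mul_of_nonneg_left (le_of_lt hcase) (by linarith)
        have h4 : 0 ≤ P*y := mul_nonneg hP hy
        have h5 : 0 ≤ x*Q := mul_nonneg hx hQ
        have h6 : 0 ≤ x*y := mul_nonneg hx hy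
        linarith [expand, h1', h3, h4, h5, h6, sq_nonneg (x+y)]
      · set sx := Real.sqrt x with hsxdef
        set sy := Real.sqrt y with hsydef
        set sP := Real.sqrt P with hsPdef
        set sQ := Real.sqrt Q with hsQdef
        have hsx : sx^2 = x := Real.sq_sqrt hx
        have hsy : sy^2 = y := Real.sq_sqrt hy
        have hsP : sP^2 = P := Real.sq_sqrt hP
        have hsQ : sQ^2 = Q := Real.sq_sqrt hQ
        have hsx0 : 0 ≤ sx := Real.sqrt_nonneg _
        have hsy0 : 0 ≤ sy := Real.sqrt_nonneg _
        have hsP0 : 0 ≤ sP := Real.sqrt_nonneg _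
        have hsQ0 : 0 ≤ sQ := Real.sqrt_nonneg _
        have hsxy2 : (sx*sy)^2 = x*y := by rw [mul_pow, hsx, hsy]
        have husx : u ≤ sx*sQ := by
          apply sqrt_sq_le' (mul_nonneg hsx0 hsQ0)
          calc u^2 ≤ x*Q := huc
            _ = (sx*sQ)^2 := by rw [mul_pow, hsx, hsQ]
        have hvsy : v ≤ sy*sP := by
          apply sqrt_sq_le' (mul_nonneg hsy0 hsP0)
          calc v^2 ≤ y*P := hvc
            _ = (sy*sP)^2 := by rw [mul_pow, hsy, hsP]
        have hw : u+v ≤ sx*sQ + sy*sP := by linarith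
        have f2 : sP*sQ ≤ m1 + rA := by
          apply sqrt_sq_le' (by linarith)
          have hPQ : (sP*sQ)^2 = P*Q := by rw [mul_pow, hsP, hsQ]
          have hmr : 0 ≤ m1*rA := mul_nonneg hm1 hrA0
          calc (sP*sQ)^2 = P*Q := hPQ
            _ ≤ m1^2 + 2*(m1*rA) + rA^2 := by linarith [hrA, hmr]
            _ = (m1+rA)^2 := by ring
        have f3 : sx*sy ≤ rA := by
          have h := sq_nonneg (sx - sy)
          have : 2*(sx*sy) ≤ x + y := by linarith [h, hsx, hsy]
          linarith
        have hrAk : rA ≤ sP*sQ := by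
          apply sqrt_sq_le' (mul_nonneg hsP0 hsQ0)
          have hPQ : (sP*sQ)^2 = P*Q := by rw [mul_pow, hsP, hsQ]
          linarith [sq_nonneg m1, hrA, hPQ]
        have f4 : 2*(sx*sy) ≤ sx*sQ + sy*sP := by
          apply sqrt_sq_le' (by positivity)
          have hkey : 0 ≤ (sx*sy)*(sP*sQ - sx*sy) :=
            mul_nonneg (mul_nonneg hsx0 hsy0) (by linarith [f3.trans hrAk])
          have h := sq_nonneg (sx*sQ - sy*sP)
          calc (2*(sx*sy))^2 = 4*((sx*sy)*(sx*sy)) := by ring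
            _ ≤ 4*((sx*sy)*(sP*sQ)) := by linarith [hkey]
            _ ≤ (sx*sQ+sy*sP)^2 := by linarith [h]
        have hprod : 0 ≤ ((sx*sQ+sy*sP)-(u+v))*((sx*sQ+sy*sP)+(u+v)-2*m1) :=
          mul_nonneg (by linarith) (by linarith)
        have step1 : 2*m1*(sx*sQ+sy*sP) - (sx*sQ+sy*sP)^2 ≤ 2*m1*(u+v) - (u+v)^2 := by
          linarith [hprod]
        have hWsq : (sx*sQ+sy*sP)^2 = x*Q + y*P + 2*((sx*sy)*(sP*sQ)) := by
          calc (sx*sQ+sy*sP)^2 = sx^2*sQ^2 + sy^2*sP^2 + 2*((sx*sy)*(sP*sQ)) := by ring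
            _ = x*Q + y*P + 2*((sx*sy)*(sP*sQ)) := by rw [hsx, hsy, hsP, hsQ]
        have c1 : (sx*sy)*(sP*sQ) ≤ (sx*sy)*(m1+rA) :=
          mul_le_mul_of_nonneg_left f2 (mul_nonneg hsx0 hsy0)
        have c2 : 2*m1*(2*(sx*sy)) ≤ 2*m1*(sx*sQ+sy*sP) :=
          mul_le_mul_of_nonneg_left f4 (by linarith)
        have c3 : 0 ≤ x + y - 2*(sx*sy) := by
          have h := sq_nonneg (sx - sy); linarith [h, hsx, hsy]
        have c4 : ((x+y)/2)*(x+y-2*(sx*sy)) ≤ rA*(x+y-2*(sx*sy)) :=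
          mul_le_mul_of_nonneg_right (by linarith) c3
        have c5 : 0 ≤ m1*(sx*sy) := mul_nonneg hm1 (mul_nonneg hsx0 hsy0)
        have hS01 : P*y + x*Q + x*y + (2*m1*(u+v) - (u+v)^2) + (x+y)*rA - ((x+y)/2)^2
            ≥ P*y + x*Q + x*y + (2*m1*(sx*sQ+sy*sP) - (sx*sQ+sy*sP)^2) + (x+y)*rA
              - ((x+y)/2)^2 := by
          linarith [step1]
        have hS12 : P*y + x*Q + x*y + (2*m1*(sx*sQ+sy*sP) - (sx*sQ+sy*sP)^2) + (x+y)*rA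
              - ((x+y)/2)^2
            = x*y + 2*m1*(sx*sQ+sy*sP) - 2*((sx*sy)*(sP*sQ)) + (x+y)*rA - ((x+y)/2)^2 := by
          linear_combination (-1 : ℝ) * hWsq
        have hS23 : x*y + 2*m1*(sx*sQ+sy*sP) - 2*((sx*sy)*(sP*sQ)) + (x+y)*rA - ((x+y)/2)^2
            ≥ x*y + 2*m1*(2*(sx*sy)) - 2*((sx*sy)*(m1+rA)) + (x+y)*rA - ((x+y)/2)^2 := by
          linarith [c1, c2]
        have hS34 : x*y + 2*m1*(2*(sx*sy)) - 2*((sx*sy)*(m1+rA)) + (x+y)*rA - ((x+y)/2)^2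
            = x*y + 2*(m1*(sx*sy)) + rA*(x+y-2*(sx*sy)) - ((x+y)/2)^2 := by ring
        have hS45 : x*y + 2*(m1*(sx*sy)) + rA*(x+y-2*(sx*sy)) - ((x+y)/2)^2
            ≥ x*y + 2*(m1*(sx*sy)) + ((x+y)/2)*(x+y-2*(sx*sy)) - ((x+y)/2)^2 := by
          linarith [c4]
        have hS56 : x*y + 2*(m1*(sx*sy)) + ((x+y)/2)*(x+y-2*(sx*sy)) - ((x+y)/2)^2
            = 2*(m1*(sx*sy)) + ((x+y)/2 - sx*sy)^2 + (x*y - (sx*sy)^2) := by ring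
        have hS6 : 0 ≤ 2*(m1*(sx*sy)) + ((x+y)/2 - sx*sy)^2 + (x*y - (sx*sy)^2) := by
          have h := sq_nonneg ((x+y)/2 - sx*sy)
          linarith [c5, h, hsxy2]
        linarith [expand, hS01, hS12, hS23, hS34, hS45, hS56, hS6]
    have h2 := Real.sqrt_le_sqrt key2
    rw [Real.sqrt_sq (by linarith)] at h2
    linarith [h2]

private lemma nuclearNorm_formula {d : ℕ} (A : Matrix (Fin d) (Fin 2) ℝ) :
    nuclearNorm A = Real.sqrt (((∑ i, (A i 0)^2) + ∑ i, (A i 1)^2) +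
      2 * Real.sqrt ((∑ i, (A i 0)^2) * (∑ i, (A i 1)^2) - (∑ i, A i 0 * A i 1)^2)) := by
  have hpsd := Matrix.posSemidef_conjTranspose_mul_self A
  set hH := hpsd.isHermitian with hHdef
  set ev := hH.eigenvalues with hevdef
  have h0 : 0 ≤ ev 0 := hpsd.eigenvalues_nonneg 0
  have h1 : 0 ≤ ev 1 := hpsd.eigenvalues_nonneg 1
  have htr : (Aᴴ * A).trace = ev 0 + ev 1 := by
    rw [hH.trace_eq_sum_eigenvalues, Fin.sum_univ_two]
    rfl
  have hdet : (Aᴴ * A).det = ev 0 * ev 1 := by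
    rw [hH.det_eq_prod_eigenvalues]
    simp [Fin.prod_univ_two]
    rfl
  have hentry : ∀ j k, (Aᴴ * A) j k = ∑ i, A i j * A i k := by
    intro j k
    simp [Matrix.mul_apply, Matrix.conjTranspose_apply]
  have htr2 : (Aᴴ * A).trace = (∑ i, (A i 0)^2) + ∑ i, (A i 1)^2 := by
    rw [Matrix.trace_fin_two, hentry 0 0, hentry 1 1]
    simp [sq]
  have hdet2 : (Aᴴ * A).det = (∑ i, (A i 0)^2) * (∑ i, (A i 1)^2) - (∑ i, A i 0 * A i 1)^2 := by
    rw [Matrix.det_fin_two, hentry 0 0, hentry 1 1, hentry 0 1, hentry 1 0]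
    congr 1
    · congr 1 <;> (apply Finset.sum_congr rfl; intro i _; ring)
    · rw [sq]
      congr 1 <;> (apply Finset.sum_congr rfl; intro i _; ring)
  have hnuc : nuclearNorm A = Real.sqrt (ev 0) + Real.sqrt (ev 1) := by
    simp [nuclearNorm, singVals, Fin.sum_univ_two, ← hHdef, ← hevdef]
    rfl
  rw [hnuc, ← htr2, ← hdet2, htr, hdet]
  rw [show Real.sqrt (ev 0 * ev 1) = Real.sqrt (ev 0) * Real.sqrt (ev 1) from Real.sqrt_mul h0 _]
  rw [show ev 0 + ev 1 + 2*(Real.sqrt (ev 0) * Real.sqrt (ev 1))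
      = (Real.sqrt (ev 0) + Real.sqrt (ev 1))^2 by
    rw [add_sq, Real.sq_sqrt h0, Real.sq_sqrt h1]; ring]
  rw [Real.sqrt_sq (by positivity)]

end auxiliary

set_option maxHeartbeats 1000000

theorem stmt_12 {d : ℕ} (H : Matrix (Fin d) (Fin 2) ℝ) :
    nuclearNorm (H.map relu) ≤ nuclearNorm H := by
  classical
  rw [nuclearNorm_formula, nuclearNorm_formula]
  apply Real.sqrt_le_sqrt
  simp only [Matrix.map_apply, relu]
  set P := ∑ i, (max (H i 0) 0)^2 with hPdef
  set Q := ∑ i, (max (H i 1) 0)^2 with hQdef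
  set m1 := ∑ i, max (H i 0) 0 * max (H i 1) 0 with hm1def
  set p := ∑ i, (H i 0)^2 with hpdef
  set q := ∑ i, (H i 1)^2 with hqdef
  set m := ∑ i, H i 0 * H i 1 with hmdef
  set x := ∑ i, (if 0 ≤ H i 1 then (max (-(H i 0)) 0)^2 else 0) with hxdef
  set y := ∑ i, (if 0 ≤ H i 0 then (max (-(H i 1)) 0)^2 else 0) with hydef
  set u := ∑ i, max (-(H i 0)) 0 * max (H i 1) 0 with hudef
  set v := ∑ i, max (H i 0) 0 * max (-(H i 1)) 0 with hvdef
  set p' := ∑ i, (if H i 0 < 0 ∧ H i 1 < 0 then (0:ℝ) else H i 0)^2 with hp'def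
  set q' := ∑ i, (if H i 0 < 0 ∧ H i 1 < 0 then (0:ℝ) else H i 1)^2 with hq'def
  set m' := ∑ i, (if H i 0 < 0 ∧ H i 1 < 0 then (0:ℝ) else H i 0) *
      (if H i 0 < 0 ∧ H i 1 < 0 then (0:ℝ) else H i 1) with hm'def
  set p3 := ∑ i, (if H i 0 < 0 ∧ H i 1 < 0 then (H i 0)^2 else 0) with hp3def
  set q3 := ∑ i, (if H i 0 < 0 ∧ H i 1 < 0 then (H i 1)^2 else 0) with hq3def
  set m3 := ∑ i, (if H i 0 < 0 ∧ H i 1 < 0 then H i 0 * H i 1 else 0) with hm3def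
  have hp'eq : p' = P + x := by
    rw [hp'def, hPdef, hxdef, ← Finset.sum_add_distrib]
    exact Finset.sum_congr rfl fun i _ => pt1 (H i 0) (H i 1)
  have hq'eq : q' = Q + y := by
    rw [hq'def, hQdef, hydef, ← Finset.sum_add_distrib]
    refine Finset.sum_congr rfl fun i _ => ?_
    have h := pt1 (H i 1) (H i 0)
    have e1 : (if H i 1 < 0 ∧ H i 0 < 0 then (0:ℝ) else H i 1)
        = (if H i 0 < 0 ∧ H i 1 < 0 then (0:ℝ) else H i 1) := if_congr and_comm rfl rfl
    rw [e1] at h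
    exact h
  have hm'eq : m' = m1 - u - v := by
    rw [hm'def, hm1def, hudef, hvdef]
    rw [show (∑ i, max (H i 0) 0 * max (H i 1) 0) - (∑ i, max (-(H i 0)) 0 * max (H i 1) 0)
        - (∑ i, max (H i 0) 0 * max (-(H i 1)) 0)
        = ∑ i, (max (H i 0) 0 * max (H i 1) 0 - max (-(H i 0)) 0 * max (H i 1) 0
            - max (H i 0) 0 * max (-(H i 1)) 0) by
      rw [Finset.sum_sub_distrib, Finset.sum_sub_distrib]]
    exact Finset.sum_congr rfl fun i _ => pt2 (H i 0) (H i 1)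
  have hpeq : p = p' + p3 := by
    rw [hpdef, hp'def, hp3def, ← Finset.sum_add_distrib]
    exact Finset.sum_congr rfl fun i _ => pt3 (H i 0) (H i 1)
  have hqeq : q = q' + q3 := by
    rw [hqdef, hq'def, hq3def, ← Finset.sum_add_distrib]
    refine Finset.sum_congr rfl fun i _ => ?_
    have h := pt3 (H i 1) (H i 0)
    have e1 : (if H i 1 < 0 ∧ H i 0 < 0 then (0:ℝ) else H i 1)
        = (if H i 0 < 0 ∧ H i 1 < 0 then (0:ℝ) else H i 1) := if_congr and_comm rfl rfl
    have e2 : (if H i 1 < 0 ∧ H i 0 < 0 then (H i 1)^2 else (0:ℝ))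
        = (if H i 0 < 0 ∧ H i 1 < 0 then (H i 1)^2 else 0) := if_congr and_comm rfl rfl
    rw [e1, e2] at h
    exact h
  have hmeq : m = m' + m3 := by
    rw [hmdef, hm'def, hm3def, ← Finset.sum_add_distrib]
    exact Finset.sum_congr rfl fun i _ => pt4 (H i 0) (H i 1)
  have hmax0 : ∀ t : ℝ, 0 ≤ max t 0 := fun t => le_max_right t 0
  have hP0 : 0 ≤ P := Finset.sum_nonneg fun i _ => sq_nonneg _
  have hQ0 : 0 ≤ Q := Finset.sum_nonneg fun i _ => sq_nonneg _
  have hm10 : 0 ≤ m1 := Finset.sum_nonneg fun i _ => mul_nonneg (hmax0 _) (hmax0 _)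
  have hx0 : 0 ≤ x := Finset.sum_nonneg fun i _ => by split_ifs <;> simp [sq_nonneg]
  have hy0 : 0 ≤ y := Finset.sum_nonneg fun i _ => by split_ifs <;> simp [sq_nonneg]
  have hu0 : 0 ≤ u := Finset.sum_nonneg fun i _ => mul_nonneg (hmax0 _) (hmax0 _)
  have hv0 : 0 ≤ v := Finset.sum_nonneg fun i _ => mul_nonneg (hmax0 _) (hmax0 _)
  have hp30 : 0 ≤ p3 := Finset.sum_nonneg fun i _ => by split_ifs <;> simp [sq_nonneg]
  have hq30 : 0 ≤ q3 := Finset.sum_nonneg fun i _ => by split_ifs <;> simp [sq_nonneg]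
  have hp'0 : 0 ≤ p' := Finset.sum_nonneg fun i _ => sq_nonneg _
  have hq'0 : 0 ≤ q' := Finset.sum_nonneg fun i _ => sq_nonneg _
  have hm1cs : m1^2 ≤ P*Q := by
    rw [hm1def, hPdef, hQdef]
    exact Finset.sum_mul_sq_le_sq_mul_sq _ _ _
  have hucs : u^2 ≤ x*Q := by
    rw [hudef, hxdef, hQdef]
    calc (∑ i, max (-(H i 0)) 0 * max (H i 1) 0)^2
        = (∑ i, (if 0 ≤ H i 1 then max (-(H i 0)) 0 else 0) * max (H i 1) 0)^2 := by
          congr 1; exact Finset.sum_congr rfl fun i _ => pt5 (H i 0) (H i 1)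
      _ ≤ (∑ i, (if 0 ≤ H i 1 then max (-(H i 0)) 0 else 0)^2) * ∑ i, (max (H i 1) 0)^2 :=
          Finset.sum_mul_sq_le_sq_mul_sq _ _ _
      _ = (∑ i, (if 0 ≤ H i 1 then (max (-(H i 0)) 0)^2 else 0)) * ∑ i, (max (H i 1) 0)^2 := by
          congr 1; exact Finset.sum_congr rfl fun i _ => pt6 _ _
  have hvcs : v^2 ≤ y*P := by
    rw [hvdef, hydef, hPdef]
    calc (∑ i, max (H i 0) 0 * max (-(H i 1)) 0)^2
        = (∑ i, (if 0 ≤ H i 0 then max (-(H i 1)) 0 else 0) * max (H i 0) 0)^2 := by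
          congr 1; refine Finset.sum_congr rfl fun i _ => ?_
          rw [← pt5 (H i 1) (H i 0)]; ring
      _ ≤ (∑ i, (if 0 ≤ H i 0 then max (-(H i 1)) 0 else 0)^2) * ∑ i, (max (H i 0) 0)^2 :=
          Finset.sum_mul_sq_le_sq_mul_sq _ _ _
      _ = (∑ i, (if 0 ≤ H i 0 then (max (-(H i 1)) 0)^2 else 0)) * ∑ i, (max (H i 0) 0)^2 := by
          congr 1; exact Finset.sum_congr rfl fun i _ => pt6 _ _
  have hm'cs : m'^2 ≤ p'*q' := by
    rw [hm'def, hp'def, hq'def]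
    exact Finset.sum_mul_sq_le_sq_mul_sq _ _ _
  have hm3cs : m3^2 ≤ p3*q3 := by
    rw [hm3def, hp3def, hq3def]
    calc (∑ i, (if H i 0 < 0 ∧ H i 1 < 0 then H i 0 * H i 1 else 0))^2
        = (∑ i, (if H i 0 < 0 ∧ H i 1 < 0 then H i 0 else 0) *
            (if H i 0 < 0 ∧ H i 1 < 0 then H i 1 else 0))^2 := by
          congr 1; exact Finset.sum_congr rfl fun i _ => (pt7 _ _ _).symm
      _ ≤ (∑ i, (if H i 0 < 0 ∧ H i 1 < 0 then H i 0 else 0)^2) *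
            ∑ i, (if H i 0 < 0 ∧ H i 1 < 0 then H i 1 else 0)^2 :=
          Finset.sum_mul_sq_le_sq_mul_sq _ _ _
      _ = (∑ i, (if H i 0 < 0 ∧ H i 1 < 0 then (H i 0)^2 else 0)) *
            ∑ i, (if H i 0 < 0 ∧ H i 1 < 0 then (H i 1)^2 else 0) := by
          congr 1 <;> exact Finset.sum_congr rfl fun i _ => pt6 _ _
  have astep : p'*q' - m'^2 ≤ p*q - m^2 := by
    rw [hpeq, hqeq, hmeq]
    exact astep_lemma p' q' p3 q3 m' m3 hp'0 hq'0 hp30 hq30 hm'cs hm3cs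
  have hBnn : 0 ≤ p'*q' - m'^2 := by nlinarith only [hm'cs, sq_nonneg m']
  have key := key_ineq P Q m1 x y u v (p'*q' - m'^2) hP0 hQ0 hm10 hx0 hy0 hu0 hv0
    hm1cs hucs hvcs (by rw [hp'eq, hq'eq, hm'eq]) hBnn
  have hsq : Real.sqrt (p'*q' - m'^2) ≤ Real.sqrt (p*q - m^2) := Real.sqrt_le_sqrt astep
  have hple : P + x ≤ p := by rw [hpeq, hp'eq]; linarith only [hp30]
  have hqle : Q + y ≤ q := by rw [hqeq, hq'eq]; linarith only [hq30]
  linarith only [key, hsq, hple, hqle]
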